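/- Let n ≥ 1, let U ⊆ {u ∈ ℝⁿ : u_i ≠ u_j for i ≠ j} be open, let Φ : U → Mat_n(ℂ) be differentiable, and fix k ∈ {1,...,n} and u ∈ U. Define M_k(u) to be the matrix with entries (M_k)_{ij} = (δ_{ik} − δ_{jk})·Φ(u)_{ij}/(u_i − u_j) for i ≠ j and 0 for i = j, and set A(z,u) = i·diag(u) − (2πi·z)⁻¹·Φ(u) and B_k(z,u) = i·z·E_k − (2πi)⁻¹·M_k(u) for z ∈ ℂ∖{0}. Then the isomonodromy equation ∂Φ/∂u_k(u) = (2πi)⁻¹·(Φ(u)·M_k(u) − M_k(u)·Φ(u)) holds at u if and only if the zero-curvature (compatibility) equation ∂A/∂u_k(z,u) − ∂B_k/∂z(z,u) = B_k(z,u)·A(z,u) − A(z,u)·B_k(z,u) holds for every z ∈ ℂ∖{0}. -/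

import Mathlib

open Matrix

open scoped Matrix.Norms.L2Operator

noncomputable section

/-- The matrix `M_k(u)` with entries `(δ_{ik} − δ_{jk})·Φ(u)_{ij}/(u_i − u_j)` off the
diagonal and `0` on the diagonal. -/
def Mmat (n : ℕ) (u : Fin n → ℝ) (P : Matrix (Fin n) (Fin n) ℂ) (k : Fin n) :
    Matrix (Fin n) (Fin n) ℂ :=
  Matrix.of fun i j =>
    if i = j then 0
    else (((if i = k then 1 else 0) : ℂ) - (if j = k then 1 else 0)) *
      P i j / ((u i : ℂ) - (u j : ℂ))

lemma aux_dE {n : ℕ} (u : Fin n → ℝ) (k : Fin n) :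
    Matrix.single k k (1:ℂ) * Matrix.diagonal (fun i => (u i : ℂ)) =
    Matrix.diagonal (fun i => (u i : ℂ)) * Matrix.single k k (1:ℂ) := by
  ext i j
  simp only [Matrix.mul_diagonal, Matrix.diagonal_mul, Matrix.single]
  by_cases hi : i = k <;> by_cases hj : j = k <;> simp [hi, hj] <;> split_ifs <;> simp_all

lemma aux_comm {n : ℕ} (u : Fin n → ℝ) (P : Matrix (Fin n) (Fin n) ℂ) (k : Fin n)
    (hreg : ∀ i j : Fin n, i ≠ j → u i ≠ u j) :
    Matrix.diagonal (fun i => (u i : ℂ)) * Mmat n u P k -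
      Mmat n u P k * Matrix.diagonal (fun i => (u i : ℂ)) =
    Matrix.single k k (1:ℂ) * P - P * Matrix.single k k (1:ℂ) := by
  ext i j
  have hEP : (Matrix.single k k (1:ℂ) * P) i j = if i = k then P i j else 0 := by
    rw [Matrix.mul_apply]
    by_cases hi : i = k
    · subst hi; simp [Matrix.single]
    · simp [Matrix.single, hi, Ne.symm hi]
  have hPE : (P * Matrix.single k k (1:ℂ)) i j = if j = k then P i j else 0 := by
    rw [Matrix.mul_apply]
    by_cases hj : j = k
    · subst hj; simp [Matrix.single]
    · simp [Matrix.single, hj, Ne.symm hj]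
  simp only [Matrix.sub_apply, Matrix.diagonal_mul, Matrix.mul_diagonal, hEP, hPE, Mmat,
    Matrix.of_apply]
  by_cases hij : i = j
  · subst hij; simp
  · have hne : (u i : ℂ) - (u j : ℂ) ≠ 0 := by
      intro h
      exact hreg i j hij (by exact_mod_cast sub_eq_zero.mp h)
    simp only [hij, if_neg hij]
    field_simp
    by_cases hi : i = k <;> by_cases hj : j = k <;> simp [hi, hj]
    · subst hi; field_simp
    · subst hj; field_simp

lemma aux_key {n : ℕ} (z : ℂ) (hz : z ≠ 0) (d E M P : Matrix (Fin n) (Fin n) ℂ)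
    (hdE : E * d = d * E) (hcomm : d * M - M * d = E * P - P * E) :
    ((Complex.I * z) • E - (2 * (Real.pi : ℂ) * Complex.I)⁻¹ • M) *
        (Complex.I • d - (2 * (Real.pi : ℂ) * Complex.I * z)⁻¹ • P) -
      (Complex.I • d - (2 * (Real.pi : ℂ) * Complex.I * z)⁻¹ • P) *
        ((Complex.I * z) • E - (2 * (Real.pi : ℂ) * Complex.I)⁻¹ • M) =
    -((2 * (Real.pi : ℂ) * Complex.I * z)⁻¹ •
        ((2 * (Real.pi : ℂ) * Complex.I)⁻¹ • (P * M - M * P))) := by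
  have hπ : (Real.pi : ℂ) ≠ 0 := by exact_mod_cast Real.pi_ne_zero
  have hI : Complex.I ≠ 0 := Complex.I_ne_zero
  have hdM : d * M = (E * P - P * E) + M * d := sub_eq_iff_eq_add.mp hcomm
  simp only [sub_mul, mul_sub, smul_mul_assoc, mul_smul_comm, smul_smul, hdE, hdM]
  match_scalars <;> field_simp <;> ring

/-- `A(z,u) = i·diag(u) − (2πi·z)⁻¹·Φ(u)`. -/
def Acoef (n : ℕ) (Φ : (Fin n → ℝ) → Matrix (Fin n) (Fin n) ℂ) (z : ℂ)
    (u : Fin n → ℝ) : Matrix (Fin n) (Fin n) ℂ :=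
  Complex.I • Matrix.diagonal (fun i => (u i : ℂ)) -
    (2 * (Real.pi : ℂ) * Complex.I * z)⁻¹ • Φ u

/-- `B_k(z,u) = i·z·E_k − (2πi)⁻¹·M_k(u)`. -/
def Bcoef (n : ℕ) (Φ : (Fin n → ℝ) → Matrix (Fin n) (Fin n) ℂ) (k : Fin n)
    (u : Fin n → ℝ) (z : ℂ) : Matrix (Fin n) (Fin n) ℂ :=
  (Complex.I * z) • Matrix.single k k (1 : ℂ) -
    (2 * (Real.pi : ℂ) * Complex.I)⁻¹ • Mmat n u (Φ u) k

lemma aux_derivB {n : ℕ} (Φ : (Fin n → ℝ) → Matrix (Fin n) (Fin n) ℂ) (k : Fin n)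
    (u : Fin n → ℝ) (z : ℂ) :
    HasDerivAt (fun w => Bcoef n Φ k u w)
      (Complex.I • Matrix.single k k (1:ℂ)) z := by
  have h : HasDerivAt (fun w : ℂ => Complex.I * w) Complex.I z := by
    simpa using (hasDerivAt_id z).const_mul Complex.I
  simpa [Bcoef] using (h.smul_const (Matrix.single k k (1:ℂ))).sub_const
    ((2 * (Real.pi : ℂ) * Complex.I)⁻¹ • Mmat n u (Φ u) k)

lemma aux_derivA {n : ℕ} (Φ : (Fin n → ℝ) → Matrix (Fin n) (Fin n) ℂ) (z : ℂ)
    (k : Fin n) (u : Fin n → ℝ) (D : Matrix (Fin n) (Fin n) ℂ)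
    (hD : HasDerivAt (fun s => Φ (Function.update u k s)) D (u k)) :
    HasDerivAt (fun s => Acoef n Φ z (Function.update u k s))
      (Complex.I • Matrix.single k k (1:ℂ) -
        (2 * (Real.pi : ℂ) * Complex.I * z)⁻¹ • D) (u k) := by
  have h1 : ∀ s : ℝ, Matrix.diagonal (fun i => ((Function.update u k s i : ℝ) : ℂ)) =
      ((s : ℂ) - (u k : ℂ)) • Matrix.single k k (1:ℂ) +
        Matrix.diagonal (fun i => (u i : ℂ)) := by
    intro s
    ext i j
    by_cases hij : i = j
    · subst hij
      by_cases hi : i = k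
      · simp [Function.update, hi, Matrix.single, sub_add_cancel]
      · simp [Function.update, hi, Matrix.single]
        exact fun h => absurd h.symm hi
    · simp [Matrix.diagonal_apply_ne _ hij, Matrix.single, hij]
      intro h1 h2
      exact absurd (h1.symm.trans h2) hij
  have hc : HasDerivAt (fun s : ℝ => ((s : ℂ) - (u k : ℂ))) 1 (u k) := by
    simpa using (Complex.ofRealCLM.hasDerivAt (x := u k)).sub_const ((u k : ℂ))
  have hder : HasDerivAt
      (fun s : ℝ => ((s : ℂ) - (u k : ℂ)) • Matrix.single k k (1:ℂ) +
        Matrix.diagonal (fun i => (u i : ℂ)))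
      (Matrix.single k k (1:ℂ)) (u k) := by
    simpa using (hc.smul_const (Matrix.single k k (1:ℂ))).add_const
      (Matrix.diagonal (fun i => (u i : ℂ)))
  have h2 := (hder.const_smul Complex.I).sub
    (hD.const_smul ((2 * (Real.pi : ℂ) * Complex.I * z)⁻¹))
  have heq : (fun s => Acoef n Φ z (Function.update u k s)) =
      fun s : ℝ => Complex.I • (((s : ℂ) - (u k : ℂ)) • Matrix.single k k (1:ℂ) +
        Matrix.diagonal (fun i => (u i : ℂ))) -
        (2 * (Real.pi : ℂ) * Complex.I * z)⁻¹ • Φ (Function.update u k s) := by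
    funext s
    rw [Acoef, h1 s]
  rw [heq]
  exact h2

/-- The isomonodromy equation `∂Φ/∂u_k = (2πi)⁻¹[Φ, ad_u⁻¹ ad_{E_k} Φ]` at `u` is
equivalent to the zero-curvature equation
`∂A/∂u_k − ∂B_k/∂z = B_k·A − A·B_k` for every `z ≠ 0`. -/
theorem stmt8 (n : ℕ) (hn : 1 ≤ n) (U : Set (Fin n → ℝ)) (hU : IsOpen U)
    (hUreg : ∀ u ∈ U, ∀ i j : Fin n, i ≠ j → u i ≠ u j)
    (Φ : (Fin n → ℝ) → Matrix (Fin n) (Fin n) ℂ)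
    (hΦ : DifferentiableOn ℝ Φ U)
    (k : Fin n) (u : Fin n → ℝ) (hu : u ∈ U)
    (D : Matrix (Fin n) (Fin n) ℂ)
    (hD : HasDerivAt (fun s => Φ (Function.update u k s)) D (u k)) :
    (D = (2 * (Real.pi : ℂ) * Complex.I)⁻¹ •
        (Φ u * Mmat n u (Φ u) k - Mmat n u (Φ u) k * Φ u)) ↔
    (∀ z : ℂ, z ≠ 0 →
      ∃ A' B' : Matrix (Fin n) (Fin n) ℂ,
        HasDerivAt (fun s => Acoef n Φ z (Function.update u k s)) A' (u k) ∧
        HasDerivAt (fun w => Bcoef n Φ k u w) B' z ∧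
        A' - B' = Bcoef n Φ k u z * Acoef n Φ z u - Acoef n Φ z u * Bcoef n Φ k u z) := by
  have hreg := hUreg u hu
  have hdE := aux_dE u k
  have hcomm := aux_comm u (Φ u) k hreg
  constructor
  · intro hDeq z hz
    refine ⟨_, _, aux_derivA Φ z k u D hD, aux_derivB Φ k u z, ?_⟩
    have hkey := aux_key z hz (Matrix.diagonal (fun i => (u i : ℂ)))
      (Matrix.single k k (1:ℂ)) (Mmat n u (Φ u) k) (Φ u) hdE hcomm
    simp only [Acoef, Bcoef]
    rw [hkey, hDeq]
    abel
  · intro h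
    obtain ⟨A', B', hA', hB', heq⟩ := h 1 one_ne_zero
    have e1 := hA'.unique (aux_derivA Φ 1 k u D hD)
    have e2 := hB'.unique (aux_derivB Φ k u 1)
    rw [e1, e2] at heq
    have hkey := aux_key 1 one_ne_zero (Matrix.diagonal (fun i => (u i : ℂ)))
      (Matrix.single k k (1:ℂ)) (Mmat n u (Φ u) k) (Φ u) hdE hcomm
    simp only [Acoef, Bcoef] at heq
    rw [hkey] at heq
    have hc : (2 * (Real.pi : ℂ) * Complex.I * 1) ≠ 0 := by
      simp [Real.pi_ne_zero, Complex.I_ne_zero]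
    have hc' : ((2 * (Real.pi : ℂ) * Complex.I * 1)⁻¹ : ℂ) ≠ 0 := inv_ne_zero hc
    have h5 : (2 * (Real.pi : ℂ) * Complex.I * 1)⁻¹ • D =
        (2 * (Real.pi : ℂ) * Complex.I * 1)⁻¹ •
          ((2 * (Real.pi : ℂ) * Complex.I)⁻¹ •
            (Φ u * Mmat n u (Φ u) k - Mmat n u (Φ u) k * Φ u)) := by
      have h6 : -((2 * (Real.pi : ℂ) * Complex.I * 1)⁻¹ • D) =
          -((2 * (Real.pi : ℂ) * Complex.I * 1)⁻¹ •
            ((2 * (Real.pi : ℂ) * Complex.I)⁻¹ •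
              (Φ u * Mmat n u (Φ u) k - Mmat n u (Φ u) k * Φ u))) := by
        rw [← heq]; abel
      exact neg_injective h6
    exact smul_right_injective _ hc' h5
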